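/- Let M be the 1×8 real matrix (1, -1, 1, 0, 0, 0, 0, 0), regarded as a 1³×2³ matrix. Then there is no 1×2 real matrix A with M = A ⊗ A ⊗ A, yet R^Σ_{1×2}(M) (taken with k = 3) has rank one. -/

import Mathlib

open Matrix Kronecker

/-- `vec A` is the vector of entries of the matrix `A`, indexed by pairs. -/
def vec {F : Type*} [Field F] {α β : Type*} (A : Matrix α β F) : α × β → F :=
  fun p => A p.1 p.2

/-- The rearrangement operator `R_{m×n}`:
`R M ((i,j),(k,l)) = M ((i,k),(j,l))`. -/
def R {F : Type*} [Field F] {m n : ℕ}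
    (M : Matrix (Fin m × Fin m) (Fin n × Fin n) F) :
    Matrix (Fin m × Fin n) (Fin m × Fin n) F :=
  fun p q => M (p.1, q.1) (p.2, q.2)

/-- The `j`-th rearrangement operator `R^{(j)}_{m×n}` on `m^k × n^k` matrices
(here with `k` replaced by `k+1` so that `k ≥ 1` automatically): the entry at
row `(a,b)` and column `(r,c)` is the entry of `M` at the tuples obtained from
`r` and `c` by inserting `a` resp. `b` at position `j`. -/
def Rj {F : Type*} [Field F] {m n k : ℕ} (j : Fin (k + 1))
    (M : Matrix (Fin (k + 1) → Fin m) (Fin (k + 1) → Fin n) F) :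
    Matrix (Fin m × Fin n) ((Fin k → Fin m) × (Fin k → Fin n)) F :=
  fun p q => M (j.insertNth p.1 q.1) (j.insertNth p.2 q.2)

/-- `R^Σ_{m×n} = Σ_j R^{(j)}_{m×n}`. -/
def RSigma {F : Type*} [Field F] {m n k : ℕ}
    (M : Matrix (Fin (k + 1) → Fin m) (Fin (k + 1) → Fin n) F) :
    Matrix (Fin m × Fin n) ((Fin k → Fin m) × (Fin k → Fin n)) F :=
  ∑ j : Fin (k + 1), Rj j M

/-- The `k`-th Kronecker power of an `m×n` matrix, indexed by tuples. -/
def kpow {F : Type*} [Field F] {m n : ℕ} (A : Matrix (Fin m) (Fin n) F) (k : ℕ) :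
    Matrix (Fin k → Fin m) (Fin k → Fin n) F :=
  fun r c => ∏ i, A (r i) (c i)

/-- The `k`-fold Kronecker product of a family of `m×n` matrices,
indexed by tuples. -/
def kprodFam {F : Type*} [Field F] {m n k : ℕ}
    (A : Fin k → Matrix (Fin m) (Fin n) F) :
    Matrix (Fin k → Fin m) (Fin k → Fin n) F :=
  fun r c => ∏ i, A i (r i) (c i)

/-- The `1³×2³` real matrix `M = (1, -1, 1, 0, 0, 0, 0, 0)`
is not a Kronecker cube, yet `R^Σ_{1×2}(M)` (with `k = 3`) has rank one. -/
theorem stmt_16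
    (M : Matrix (Fin 3 → Fin 1) (Fin 3 → Fin 2) ℝ)
    (hM : M = fun _ c =>
      if c = ![0, 0, 0] then 1
      else if c = ![0, 0, 1] then -1
      else if c = ![0, 1, 0] then 1
      else 0) :
    (¬ ∃ A : Matrix (Fin 1) (Fin 2) ℝ, M = kpow A 3) ∧ (RSigma M).rank = 1 := by
  constructor
  · rintro ⟨A, hA⟩
    subst hM
    have h1 := congrFun (congrFun hA (fun _ => 0)) ![0,0,1]
    have h2 := congrFun (congrFun hA (fun _ => 0)) ![0,1,0]
    simp (config := { decide := true }) [kpow, Fin.prod_univ_three] at h1 h2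
    nlinarith [h1, h2]
  · have hcases : ∀ c : Fin 2 → Fin 2,
        c = ![0,0] ∨ c = ![0,1] ∨ c = ![1,0] ∨ c = ![1,1] := by decide
    have key : RSigma M = Matrix.vecMulVec
        (fun p : Fin 1 × Fin 2 => if p.2 = 0 then (1:ℝ) else 0)
        (fun q => RSigma M ((0 : Fin 1), (0 : Fin 2)) q) := by
      ext ⟨a, b⟩ ⟨r, c⟩
      have ha : a = 0 := Subsingleton.elim _ _
      have hr : r = fun _ => 0 := Subsingleton.elim _ _
      subst ha hr
      rcases hcases c with h | h | h | h <;> subst h <;>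
        fin_cases b <;>
        simp (config := { decide := true }) [hM, RSigma, Rj, vecMulVec,
          Fin.sum_univ_three]
    have hval : RSigma M 0 ((fun _ => 0), ![0,0]) = 3 := by
      simp (config := { decide := true }) [hM, RSigma, Rj, Fin.sum_univ_three]
      norm_num
    have hle : (RSigma M).rank ≤ 1 := by
      rw [key, Matrix.vecMulVec_eq Unit]
      exact le_trans (Matrix.rank_mul_le_left _ _)
        (le_trans (Matrix.rank_le_card_width _) (by simp))
    have hne : (RSigma M).rank ≠ 0 := by
      intro h
      rw [Matrix.rank, Submodule.finrank_eq_zero, LinearMap.range_eq_bot] at h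
      have h3 : (RSigma M).mulVec (Pi.single ((fun _ => 0), ![0,0]) 1) = 0 := by
        rw [← Matrix.mulVecLin_apply, h]; rfl
      have h4 := congrFun h3 ((0 : Fin 1), (0 : Fin 2))
      rw [Matrix.mulVec_single] at h4
      simp [hval] at h4
      exact absurd (show RSigma M 0 ((fun _ => 0), ![0,0]) = 0 from h4) (by rw [hval]; norm_num)
    omega
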